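/- Let h₀ > 0 and define w : ℝ² → ℝ by w(x) = −2·ln(1 + π·h₀·|x|²). Then lim_{R → ∞} [ (1/(16π))·∫_{B_R(0)} ‖∇w(x)‖² dx − ln(π·h₀·R²) ] = −1. -/

import Mathlib

open MeasureTheory Filter InnerProductSpace
open MeasureTheory Filter

lemma grad_eq (a : ℝ) (ha : 0 < a) (w : EuclideanSpace ℝ (Fin 2) → ℝ)
    (hw : ∀ x, w x = -2 * Real.log (1 + a * ‖x‖ ^ 2)) (x : EuclideanSpace ℝ (Fin 2)) :
    HasGradientAt w ((-4 * a / (1 + a * ‖x‖ ^ 2)) • x) x := by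
  have hd : (0:ℝ) < 1 + a * ‖x‖ ^ 2 := by positivity
  have h1 : HasFDerivAt (fun y : EuclideanSpace ℝ (Fin 2) => ‖y‖ ^ 2)
      ((2:ℕ) • (innerSL ℝ x)) x := by
    simpa using (hasFDerivAt_id x).norm_sq
  have h2 : HasDerivAt (fun t : ℝ => -2 * Real.log (1 + a * t))
      (-2 * (a / (1 + a * ‖x‖ ^ 2))) (‖x‖ ^ 2) := by
    have hu : HasDerivAt (fun t : ℝ => 1 + a * t) a (‖x‖^2) := by
      simpa using ((hasDerivAt_id (‖x‖^2)).const_mul a).const_add (1:ℝ)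
    simpa using (hu.log hd.ne').const_mul (-2 : ℝ)
  have h3 := h2.comp_hasFDerivAt x h1
  rw [hasGradientAt_iff_hasFDerivAt]
  have : (fun y : EuclideanSpace ℝ (Fin 2) => -2 * Real.log (1 + a * ‖y‖^2)) = w := by
    ext y; rw [hw y]
  simp only [Function.comp_def] at h3
  rw [this] at h3
  convert h3 using 1
  rfl
  ext y
  simp [toDual_apply_apply, real_inner_smul_left]
  ring

lemma ftc_aux (a : ℝ) (ha : 0 < a) (r : ℝ) :
    HasDerivAt (fun r : ℝ => 8 * (Real.log (1 + a * r ^ 2) + (1 + a * r ^ 2)⁻¹))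
      (r * (4 * a * r / (1 + a * r ^ 2)) ^ 2) r := by
  have hd : (0:ℝ) < 1 + a * r ^ 2 := by positivity
  have hu : HasDerivAt (fun t : ℝ => 1 + a * t ^ 2) (a * (2 * r)) r := by
    simpa using ((hasDerivAt_pow 2 r).const_mul a).const_add (1:ℝ)
  have h := ((hu.log hd.ne').add (hu.inv hd.ne')).const_mul (8:ℝ)
  convert h using 1
  iterate 3 rfl
  field_simp
  ring

lemma vol_ball : (volume (Metric.ball (0 : EuclideanSpace ℝ (Fin 2)) 1)).toReal = Real.pi := by
  rw [EuclideanSpace.volume_ball]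
  norm_num [Real.Gamma_two, Real.sq_sqrt Real.pi_pos.le, ENNReal.toReal_ofReal Real.pi_pos.le]

lemma integral_eq (a : ℝ) (ha : 0 < a) (w : EuclideanSpace ℝ (Fin 2) → ℝ)
    (hw : ∀ x, w x = -2 * Real.log (1 + a * ‖x‖ ^ 2)) (R : ℝ) (hR : 0 < R) :
    (∫ x in Metric.ball (0 : EuclideanSpace ℝ (Fin 2)) R, ‖gradient w x‖ ^ 2)
      = 16 * Real.pi * (Real.log (1 + a * R ^ 2) + (1 + a * R ^ 2)⁻¹ - 1) := by
  set g : ℝ → ℝ := fun r => (4 * a * r / (1 + a * r ^ 2)) ^ 2 with hg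
  have hpt : ∀ x : EuclideanSpace ℝ (Fin 2), ‖gradient w x‖ ^ 2 = g ‖x‖ := by
    intro x
    have hd : (0:ℝ) < 1 + a * ‖x‖ ^ 2 := by positivity
    rw [(grad_eq a ha w hw x).gradient, norm_smul, mul_pow, Real.norm_eq_abs, sq_abs, hg]
    field_simp
  simp only [hpt]
  rw [← integral_indicator measurableSet_ball]
  have hind : ∀ x : EuclideanSpace ℝ (Fin 2),
      (Metric.ball (0 : EuclideanSpace ℝ (Fin 2)) R).indicator (fun x => g ‖x‖) x
        = (Set.Iio R).indicator g ‖x‖ := by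
    intro x
    by_cases h : ‖x‖ < R <;> simp [Set.indicator, mem_ball_zero_iff, h]
  simp only [hind]
  rw [MeasureTheory.integral_fun_norm_addHaar volume ((Set.Iio R).indicator g)]
  have hdim : Module.finrank ℝ (EuclideanSpace ℝ (Fin 2)) = 2 := by
    simp [finrank_euclideanSpace]
  rw [hdim, measureReal_def, vol_ball]
  have hsm : ∀ y : ℝ, y ^ (2 - 1) • (Set.Iio R).indicator g y
      = (Set.Iio R).indicator (fun y => y * g y) y := by
    intro y
    by_cases h : y < R <;> simp [Set.indicator, h]
  simp only [hsm]
  rw [setIntegral_indicator measurableSet_Iio, Set.Ioi_inter_Iio,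
    ← integral_Ioc_eq_integral_Ioo, ← intervalIntegral.integral_of_le hR.le]
  have hgc : Continuous fun y : ℝ => y * g y := by
    apply continuous_id.mul
    apply Continuous.pow
    exact Continuous.div (continuous_const.mul continuous_id)
      (continuous_const.add (continuous_const.mul (continuous_pow 2)))
      (fun x => by positivity)
  rw [intervalIntegral.integral_eq_sub_of_hasDerivAt (fun r _ => ftc_aux a ha r)
    (hgc.intervalIntegrable 0 R)]
  simp [Real.log_one]
  ring
theorem stmt_6 (h₀ : ℝ) (hh : 0 < h₀)
    (w : EuclideanSpace ℝ (Fin 2) → ℝ)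
    (hw : ∀ x, w x = -2 * Real.log (1 + Real.pi * h₀ * ‖x‖ ^ 2)) :
    Tendsto (fun R : ℝ =>
        (1 / (16 * Real.pi)) *
          (∫ x in Metric.ball (0 : EuclideanSpace ℝ (Fin 2)) R, ‖gradient w x‖ ^ 2) -
        Real.log (Real.pi * h₀ * R ^ 2))
      atTop (nhds (-1)) := by
  set a : ℝ := Real.pi * h₀ with ha_def
  have ha : 0 < a := mul_pos Real.pi_pos hh
  have hsq : Tendsto (fun R : ℝ => a * R ^ 2) atTop atTop :=
    (tendsto_pow_atTop two_ne_zero).const_mul_atTop ha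
  have t1 : Tendsto (fun R : ℝ => (a * R ^ 2)⁻¹) atTop (nhds 0) := hsq.inv_tendsto_atTop
  have t2 : Tendsto (fun R : ℝ => (1 + a * R ^ 2)⁻¹) atTop (nhds 0) :=
    (tendsto_atTop_add_const_left _ 1 hsq).inv_tendsto_atTop
  have t3 : Tendsto (fun R : ℝ => Real.log ((a * R ^ 2)⁻¹ + 1)) atTop (nhds 0) := by
    have hc : Tendsto (fun R : ℝ => (a * R ^ 2)⁻¹ + 1) atTop (nhds 1) := by
      simpa using t1.add tendsto_const_nhds
    have := (Real.continuousAt_log one_ne_zero).tendsto.comp hc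
    rw [Real.log_one] at this
    exact this
  have tmain : Tendsto (fun R : ℝ =>
      Real.log ((a * R ^ 2)⁻¹ + 1) + (1 + a * R ^ 2)⁻¹ - 1) atTop (nhds (-1)) := by
    have := (t3.add t2).sub (tendsto_const_nhds (x := (1:ℝ)))
    simpa using this
  refine Tendsto.congr' ?_ tmain
  filter_upwards [eventually_gt_atTop (0:ℝ)] with R hR
  have h1 : 0 < a * R ^ 2 := by positivity
  have h2 : (0:ℝ) < 1 + a * R ^ 2 := by positivity
  rw [integral_eq a ha w hw R hR]
  have hlog : Real.log ((a * R ^ 2)⁻¹ + 1)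
      = Real.log (1 + a * R ^ 2) - Real.log (a * R ^ 2) := by
    rw [show (a * R ^ 2)⁻¹ + 1 = (1 + a * R ^ 2) / (a * R ^ 2) by field_simp,
      Real.log_div h2.ne' h1.ne']
  rw [hlog]
  have hpi : Real.pi ≠ 0 := Real.pi_ne_zero
  field_simp
  ring
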